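/- Let H and K be complex Hilbert spaces, φ : B(H) → B(K) a unital completely positive linear map, and U ∈ B(H) a unitary operator. Then for every positive integer d, the d-tuple (φ(U), φ(U²), …, φ(U^d)) is Toeplitz-contractive. -/

import Mathlib

open scoped ComplexOrder

noncomputable section

variable {H : Type*} [NormedAddCommGroup H] [InnerProductSpace ℂ H] [CompleteSpace H]

/-- The `(i, j)` entry of the `(d+1) × (d+1)` block Toeplitz operator matrix associated to a
`d`-tuple `T` of bounded operators on `H`, with diagonal entries `α • 1`: it is `α • 1` if
`i = j`, `T_{i-j}` if `i > j`, and `(T_{j-i})*` if `i < j`. -/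
def tEntry {d : ℕ} (T : Fin d → H →L[ℂ] H) (α : ℂ) (i j : Fin (d + 1)) : H →L[ℂ] H :=
  if _h1 : (i : ℕ) = (j : ℕ) then α • (1 : H →L[ℂ] H)
  else if _h2 : (j : ℕ) < (i : ℕ) then
    T ⟨(i : ℕ) - (j : ℕ) - 1, by have := i.isLt; omega⟩
  else
    ContinuousLinearMap.adjoint (T ⟨(j : ℕ) - (i : ℕ) - 1, by have := j.isLt; omega⟩)

/-- Positivity of a block operator matrix `M`, expressed through its quadratic form on the
direct sum of copies of `H`: for every vector `x = (x_i)`, `∑ i j, ⟪M i j (x j), x i⟫ ≥ 0`. -/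
def IsPosBlockMatrix {ι : Type*} [Fintype ι] (M : ι → ι → (H →L[ℂ] H)) : Prop :=
  ∀ x : ι → H, 0 ≤ ∑ i, ∑ j, (inner ℂ (M i j (x j)) (x i) : ℂ)

/-- A `d`-tuple of operators is Toeplitz-contractive if its block Toeplitz operator matrix
(with 1's on the diagonal) is a positive operator on `⊕_1^{d+1} H`. -/
def ToeplitzContractive {d : ℕ} (T : Fin d → H →L[ℂ] H) : Prop :=
  IsPosBlockMatrix (tEntry T 1)

variable {K : Type*} [NormedAddCommGroup K] [InnerProductSpace ℂ K] [CompleteSpace K]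

/-- A linear map `φ : B(H) → B(K)` is unital completely positive if `φ(1) = 1` and, for every
`p`, applying `φ` entrywise to a positive `p × p` block operator matrix over `B(H)` yields a
positive `p × p` block operator matrix over `B(K)`. -/
def IsUCP (φ : (H →L[ℂ] H) →ₗ[ℂ] (K →L[ℂ] K)) : Prop :=
  φ 1 = 1 ∧
    ∀ (p : ℕ) (M : Fin p → Fin p → (H →L[ℂ] H)),
      IsPosBlockMatrix M → IsPosBlockMatrix fun i j => φ (M i j)

-- auxiliary lemmas

lemma aux_adjoint_of_pos2 (N : Fin 2 → Fin 2 → (K →L[ℂ] K)) (h : IsPosBlockMatrix N) :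
    N 1 0 = ContinuousLinearMap.adjoint (N 0 1) := by
  have hq : ∀ x : Fin 2 → K,
      (0:ℂ) ≤ inner ℂ (N 0 0 (x 0)) (x 0) + inner ℂ (N 0 1 (x 1)) (x 0)
        + inner ℂ (N 1 0 (x 0)) (x 1) + inner ℂ (N 1 1 (x 1)) (x 1) := by
    intro x
    have := h x
    simpa [Fin.sum_univ_two, add_assoc] using this
  have hdiag0 : ∀ u : K, ((inner ℂ (N 0 0 u) u : ℂ)).im = 0 := by
    intro u
    have := hq ![u, 0]
    simp at this
    exact ((Complex.nonneg_iff.mp this).2).symm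
  have hdiag1 : ∀ v : K, ((inner ℂ (N 1 1 v) v : ℂ)).im = 0 := by
    intro v
    have := hq ![0, v]
    simp at this
    exact ((Complex.nonneg_iff.mp this).2).symm
  have him : ∀ u v : K, ((inner ℂ (N 0 1 v) u : ℂ) + (inner ℂ (N 1 0 u) v : ℂ)).im = 0 := by
    intro u v
    have h1 := hq ![u, v]
    simp only [Matrix.cons_val_zero, Matrix.cons_val_one, Matrix.head_cons] at h1
    have h2 := (Complex.nonneg_iff.mp h1).2.symm
    simp only [Complex.add_im] at h2 ⊢
    rw [hdiag0 u, hdiag1 v] at h2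
    linarith
  have key : ∀ u v : K, (inner ℂ (N 0 1 v) u : ℂ)
      = inner ℂ ((ContinuousLinearMap.adjoint (N 1 0)) v) u := by
    intro u v
    set a : ℂ := inner ℂ (N 0 1 v) u with ha
    set b : ℂ := inner ℂ ((ContinuousLinearMap.adjoint (N 1 0)) v) u with hb
    have hbc : (inner ℂ (N 1 0 u) v : ℂ) = starRingEnd ℂ b := by
      rw [hb, ContinuousLinearMap.adjoint_inner_left, ← inner_conj_symm]
    have e1 : a.im = b.im := by
      have := him u v
      rw [hbc] at this
      simp [Complex.add_im, Complex.conj_im] at this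
      linarith
    have e2 : a.re = b.re := by
      have := him (Complex.I • u) v
      have ha' : (inner ℂ (N 0 1 v) (Complex.I • u) : ℂ) = Complex.I * a := by
        rw [inner_smul_right, ha]
      have hb' : (inner ℂ (N 1 0 (Complex.I • u)) v : ℂ) = starRingEnd ℂ (Complex.I * b) := by
        rw [map_smul, inner_smul_left, hbc, ← map_mul]
      rw [ha', hb'] at this
      simp [Complex.add_im, Complex.mul_im, Complex.conj_im, Complex.I_re, Complex.I_im] at this
      linarith
    exact Complex.ext e2 e1
  have h01 : N 0 1 = ContinuousLinearMap.adjoint (N 1 0) := by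
    ext v
    exact ext_inner_left ℂ fun u => by
      rw [← inner_conj_symm, key u v, inner_conj_symm]
  rw [h01, ContinuousLinearMap.adjoint_adjoint]

lemma aux_ucp_star (φ : (H →L[ℂ] H) →ₗ[ℂ] (K →L[ℂ] K)) (hφ : IsUCP φ)
    (V : H →L[ℂ] H) (hV : V ∈ unitary (H →L[ℂ] H)) : φ (star V) = star (φ V) := by
  set M : Fin 2 → Fin 2 → (H →L[ℂ] H) := ![![1, V], ![star V, 1]] with hM
  have hpos : IsPosBlockMatrix M := by
    intro x
    have hstar : (inner ℂ ((star V) (x 0)) (x 1) : ℂ) = inner ℂ (x 0) (V (x 1)) := by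
      rw [ContinuousLinearMap.star_eq_adjoint, ContinuousLinearMap.adjoint_inner_left]
    have hnorm : (inner ℂ (x 1) (x 1) : ℂ) = inner ℂ (V (x 1)) (V (x 1)) := by
      rw [← ContinuousLinearMap.adjoint_inner_right, ← ContinuousLinearMap.star_eq_adjoint,
        ← ContinuousLinearMap.mul_apply, Unitary.star_mul_self_of_mem hV,
        ContinuousLinearMap.one_apply]
    have : ∑ i, ∑ j, (inner ℂ (M i j (x j)) (x i) : ℂ)
        = inner ℂ (x 0 + V (x 1)) (x 0 + V (x 1)) := by
      simp only [Fin.sum_univ_two, hM, Matrix.cons_val_zero, Matrix.cons_val_one,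
        Matrix.head_cons, ContinuousLinearMap.one_apply]
      rw [inner_add_add_self, hstar, hnorm]
      ring
    rw [this, inner_self_eq_norm_sq_to_K]
    positivity
  have := aux_adjoint_of_pos2 (fun i j => φ (M i j)) (hφ.2 2 M hpos)
  simp only [hM, Matrix.cons_val_zero, Matrix.cons_val_one, Matrix.head_cons] at this
  rw [this, ContinuousLinearMap.star_eq_adjoint]

lemma aux_tEntry_unitary {d : ℕ} (U : H →L[ℂ] H) (hU : U ∈ unitary (H →L[ℂ] H))
    (i j : Fin (d + 1)) :
    tEntry (fun k : Fin d => U ^ ((k : ℕ) + 1)) 1 i j = U ^ (i : ℕ) * star (U ^ (j : ℕ)) := by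
  unfold tEntry
  split_ifs with h1 h2
  · rw [one_smul, h1, Unitary.mul_star_self_of_mem (pow_mem hU (j : ℕ))]
  · simp only
    have e : (i : ℕ) - (j : ℕ) - 1 + 1 = (i : ℕ) - (j : ℕ) := by omega
    have e2 : U ^ (i : ℕ) = U ^ ((i : ℕ) - (j : ℕ)) * U ^ (j : ℕ) := by
      rw [← pow_add]; congr 1; omega
    rw [e, e2, mul_assoc, Unitary.mul_star_self_of_mem (pow_mem hU (j : ℕ)), mul_one]
  · simp only
    have hij : (i : ℕ) < (j : ℕ) := by omega
    have e : (j : ℕ) - (i : ℕ) - 1 + 1 = (j : ℕ) - (i : ℕ) := by omega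
    have e2 : U ^ (j : ℕ) = U ^ ((j : ℕ) - (i : ℕ)) * U ^ (i : ℕ) := by
      rw [← pow_add]; congr 1; omega
    rw [← ContinuousLinearMap.star_eq_adjoint, e, e2, star_mul, ← mul_assoc,
      Unitary.mul_star_self_of_mem (pow_mem hU (i : ℕ)), one_mul]

lemma aux_pos_toeplitz {d : ℕ} (U : H →L[ℂ] H) (hU : U ∈ unitary (H →L[ℂ] H)) :
    IsPosBlockMatrix (tEntry (fun k : Fin d => U ^ ((k : ℕ) + 1)) 1) := by
  intro x
  have key : ∀ i j : Fin (d + 1),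
      (inner ℂ ((tEntry (fun k : Fin d => U ^ ((k : ℕ) + 1)) 1 i j) (x j)) (x i) : ℂ)
        = inner ℂ ((star (U ^ (j : ℕ))) (x j)) ((star (U ^ (i : ℕ))) (x i)) := by
    intro i j
    rw [aux_tEntry_unitary U hU, ContinuousLinearMap.mul_apply,
      ContinuousLinearMap.star_eq_adjoint, ContinuousLinearMap.star_eq_adjoint,
      ContinuousLinearMap.adjoint_inner_right]
  simp_rw [key, ← sum_inner, ← inner_sum]
  rw [inner_self_eq_norm_sq_to_K]
  positivity

/-- if `φ : B(H) → B(K)` is a unital completely positive linear map and `U ∈ B(H)`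
is a unitary operator, then for every positive integer `d` the `d`-tuple
`(φ(U), φ(U²), …, φ(U^d))` is Toeplitz-contractive. -/
theorem toeplitzContractive_ucp_image_of_unitary
    (φ : (H →L[ℂ] H) →ₗ[ℂ] (K →L[ℂ] K)) (hφ : IsUCP φ)
    (U : H →L[ℂ] H) (hU : U ∈ unitary (H →L[ℂ] H))
    (d : ℕ) (hd : 0 < d) :
    ToeplitzContractive (fun k : Fin d => φ (U ^ ((k : ℕ) + 1))) := by
  have hpos := hφ.2 (d + 1) _ (aux_pos_toeplitz U hU (d := d))
  have heq : tEntry (fun k : Fin d => φ (U ^ ((k : ℕ) + 1))) 1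
      = fun i j => φ (tEntry (fun k : Fin d => U ^ ((k : ℕ) + 1)) 1 i j) := by
    funext i j
    unfold tEntry
    split_ifs with h1 h2
    · simp [hφ.1]
    · rfl
    · simp only
      rw [← ContinuousLinearMap.star_eq_adjoint, ← ContinuousLinearMap.star_eq_adjoint,
        aux_ucp_star φ hφ _ (pow_mem hU _)]
  show IsPosBlockMatrix _
  rw [heq]
  exact hpos
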